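/- arXiv:math/0012181 — 2 statements merged into one kernel-verified Lean document; each statement's English description precedes it below -/
import Mathlib

section
/- (Comparison principle) Suppose f is quasimonotone: for all (u, p), ∂f_i/∂u_j(u, p) ≥ 0 whenever i ≠ j, and for each i the component f_i(u, p) depends on p only through p_i (i.e. ∂f_i/∂p_j = 0 for j ≠ i). Let T > 0 and let u, v : ℝ × [0, T] → ℝ^N be continuous, C¹ in t and C² in x on ℝ × (0, T], bounded together with their spatial derivatives, and satisfy componentwise u_t − A u_xx − f(u, u_x) ≤ 0 and v_t − A v_xx − f(v, v_x) ≥ 0 on ℝ × (0, T]. If u_i(x, 0) ≤ v_i(x, 0) for all x ∈ ℝ and all i = 1, …, N, then u_i(x, t) ≤ v_i(x, t) for all x ∈ ℝ, t ∈ [0, T], and all i. -/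
open Matrix Filter Topology

/-- Jacobian of f with respect to its first argument. -/
noncomputable def Du {N : ℕ} (f : (Fin N → ℝ) → (Fin N → ℝ) → Fin N → ℝ)
    (u p : Fin N → ℝ) : Matrix (Fin N) (Fin N) ℝ :=
  fun i j => fderiv ℝ (fun u' => f u' p i) u (Pi.single j 1)

/-- Jacobian of f with respect to its second argument. -/
noncomputable def Dp {N : ℕ} (f : (Fin N → ℝ) → (Fin N → ℝ) → Fin N → ℝ)
    (u p : Fin N → ℝ) : Matrix (Fin N) (Fin N) ℝ :=
  fun i j => fderiv ℝ (fun p' => f u p' i) p (Pi.single j 1)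

lemma aux_left_deriv_nonneg {g : ℝ → ℝ} {a : ℝ} (hg : DifferentiableAt ℝ g a)
    (h : ∀ᶠ t in 𝓝[<] a, g t ≤ g a) : 0 ≤ deriv g a := by
  have hs : Tendsto (slope g a) (𝓝[<] a) (𝓝 (deriv g a)) :=
    (hasDerivAt_iff_tendsto_slope.mp hg.hasDerivAt).mono_left
      (nhdsWithin_mono a fun x hx => ne_of_lt hx)
  refine ge_of_tendsto hs ?_
  filter_upwards [h, self_mem_nhdsWithin] with t ht hta
  have h1 : g t - g a ≤ 0 := sub_nonpos.2 ht
  have h2 : t - a < 0 := sub_neg.2 hta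
  rw [slope_def_field]
  rw [div_nonneg_iff]
  right
  exact ⟨h1, h2.le⟩

lemma aux_second_deriv_nonpos {F : ℝ → ℝ} {a : ℝ} (hF : ContDiff ℝ 2 F)
    (hmax : ∀ x, F x ≤ F a) : deriv (deriv F) a ≤ 0 := by
  by_contra h
  push_neg at h
  have hd : Differentiable ℝ F ∧ ContDiff ℝ 1 (deriv F) := by
    have := (contDiff_succ_iff_deriv (n := 1)).mp (by norm_num at hF ⊢; exact hF)
    exact ⟨this.1, this.2.2⟩
  have hF1 : deriv F a = 0 :=
    IsLocalMax.deriv_eq_zero (Filter.Eventually.of_forall fun x => hmax x)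
  have hdd : DifferentiableAt ℝ (deriv F) a := (hd.2.differentiable one_ne_zero) a
  have hs : Tendsto (slope (deriv F) a) (𝓝[>] a) (𝓝 (deriv (deriv F) a)) :=
    (hasDerivAt_iff_tendsto_slope.mp hdd.hasDerivAt).mono_left
      (nhdsWithin_mono a fun x hx => ne_of_gt hx)
  have hpos : ∀ᶠ t in 𝓝[>] a, 0 < deriv F t := by
    have := hs.eventually (eventually_gt_nhds h)
    filter_upwards [this, self_mem_nhdsWithin] with t ht hta
    rw [slope_def_field, hF1, sub_zero] at ht
    have := mul_pos ht (sub_pos.2 (hta : a < t))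
    rwa [div_mul_cancel₀] at this
    exact sub_ne_zero.2 (ne_of_gt hta)
  obtain ⟨b, hb, hsub⟩ := mem_nhdsGT_iff_exists_Ioo_subset.mp hpos
  set c := (a + b) / 2 with hc
  have hac : a < c := by simp [hc]; linarith [hb.out]
  have hcb : c < b := by simp [hc]; linarith [hb.out]
  have hmono : StrictMonoOn F (Set.Icc a c) := by
    apply strictMonoOn_of_deriv_pos (convex_Icc a c) (hF.continuous.continuousOn)
    intro x hx
    rw [interior_Icc] at hx
    exact hsub ⟨hx.1, hx.2.trans hcb⟩
  have := hmono (Set.left_mem_Icc.2 hac.le) (Set.right_mem_Icc.2 hac.le) hac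
  exact absurd (hmax c) (not_le.2 this)

lemma aux_hasDerivAt_apply {N : ℕ} {F : ℝ → Fin N → ℝ} {x : ℝ} {d : Fin N → ℝ}
    (h : HasDerivAt F d x) (i : Fin N) : HasDerivAt (fun y => F y i) (d i) x :=
  (ContinuousLinearMap.proj (R := ℝ) (φ := fun _ : Fin N => ℝ) i).hasFDerivAt.comp_hasDerivAt x h

lemma aux_deriv_apply {N : ℕ} {F : ℝ → Fin N → ℝ} {x : ℝ}
    (h : DifferentiableAt ℝ F x) (i : Fin N) :
    deriv (fun y => F y i) x = deriv F x i :=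
  (aux_hasDerivAt_apply h.hasDerivAt i).deriv

lemma aux_deriv2_apply {N : ℕ} {F : ℝ → Fin N → ℝ} (h : ContDiff ℝ 2 F) (x : ℝ) (i : Fin N) :
    deriv (deriv (fun y => F y i)) x = deriv (deriv F) x i := by
  have h2 : Differentiable ℝ F ∧ ContDiff ℝ 1 (deriv F) := by
    have := (contDiff_succ_iff_deriv (n := 1)).mp (by norm_num at h ⊢; exact h)
    exact ⟨this.1, this.2.2⟩
  have h1 : deriv (fun y : ℝ => F y i) = fun y => deriv F y i :=
    funext fun y => aux_deriv_apply (h2.1 y) i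
  rw [h1]
  exact aux_deriv_apply ((h2.2.differentiable one_ne_zero) x) i

-- pi decomposition
lemma aux_pi_decomp {N : ℕ} (x : Fin N → ℝ) :
    x = ∑ j : Fin N, x j • (Pi.single j (1 : ℝ) : Fin N → ℝ) := by
  funext k
  simp [Finset.sum_apply, Pi.single_apply, Finset.sum_ite_eq', mul_comm]

lemma aux_fderiv_partial_fst {N : ℕ} {f : (Fin N → ℝ) → (Fin N → ℝ) → Fin N → ℝ}
    (hf : ContDiff ℝ 1 (fun q : (Fin N → ℝ) × (Fin N → ℝ) => f q.1 q.2))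
    (a b : Fin N → ℝ) (i j : Fin N) :
    Du f a b i j
      = fderiv ℝ (fun q : (Fin N → ℝ) × (Fin N → ℝ) => f q.1 q.2) (a, b) (Pi.single j 1, 0) i := by
  have hd : HasFDerivAt (fun q : (Fin N → ℝ) × (Fin N → ℝ) => f q.1 q.2)
      (fderiv ℝ (fun q : (Fin N → ℝ) × (Fin N → ℝ) => f q.1 q.2) (a, b)) (a, b) :=
    ((hf.differentiable one_ne_zero) (a, b)).hasFDerivAt
  have hincl : HasFDerivAt (fun u' : Fin N → ℝ => (u', b))
      (ContinuousLinearMap.inl ℝ (Fin N → ℝ) (Fin N → ℝ)) a := hasFDerivAt_prodMk_left a b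
  have hcomp : HasFDerivAt (fun u' : Fin N → ℝ => f u' b i)
      (((ContinuousLinearMap.proj (R := ℝ) (φ := fun _ : Fin N => ℝ) i).comp
        ((fderiv ℝ (fun q : (Fin N → ℝ) × (Fin N → ℝ) => f q.1 q.2) (a, b)).comp
          (ContinuousLinearMap.inl ℝ (Fin N → ℝ) (Fin N → ℝ))))) a :=
    (ContinuousLinearMap.proj (R := ℝ) (φ := fun _ : Fin N => ℝ) i).hasFDerivAt.comp a (by exact hd.comp a hincl)
  rw [Du, hcomp.fderiv]
  simp

lemma aux_fderiv_partial_snd {N : ℕ} {f : (Fin N → ℝ) → (Fin N → ℝ) → Fin N → ℝ}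
    (hf : ContDiff ℝ 1 (fun q : (Fin N → ℝ) × (Fin N → ℝ) => f q.1 q.2))
    (a b : Fin N → ℝ) (i j : Fin N) :
    Dp f a b i j
      = fderiv ℝ (fun q : (Fin N → ℝ) × (Fin N → ℝ) => f q.1 q.2) (a, b) (0, Pi.single j 1) i := by
  have hd : HasFDerivAt (fun q : (Fin N → ℝ) × (Fin N → ℝ) => f q.1 q.2)
      (fderiv ℝ (fun q : (Fin N → ℝ) × (Fin N → ℝ) => f q.1 q.2) (a, b)) (a, b) :=
    ((hf.differentiable one_ne_zero) (a, b)).hasFDerivAt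
  have hincl : HasFDerivAt (fun p' : Fin N → ℝ => (a, p'))
      (ContinuousLinearMap.inr ℝ (Fin N → ℝ) (Fin N → ℝ)) b := hasFDerivAt_prodMk_right a b
  have hcomp : HasFDerivAt (fun p' : Fin N → ℝ => f a p' i)
      (((ContinuousLinearMap.proj (R := ℝ) (φ := fun _ : Fin N => ℝ) i).comp
        ((fderiv ℝ (fun q : (Fin N → ℝ) × (Fin N → ℝ) => f q.1 q.2) (a, b)).comp
          (ContinuousLinearMap.inr ℝ (Fin N → ℝ) (Fin N → ℝ))))) b :=
    (ContinuousLinearMap.proj (R := ℝ) (φ := fun _ : Fin N => ℝ) i).hasFDerivAt.comp b (hd.comp b hincl)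
  rw [Dp, hcomp.fderiv]
  simp

lemma aux_fderiv_decomp {N : ℕ} {f : (Fin N → ℝ) → (Fin N → ℝ) → Fin N → ℝ}
    (hf : ContDiff ℝ 1 (fun q : (Fin N → ℝ) × (Fin N → ℝ) => f q.1 q.2))
    (P d : (Fin N → ℝ) × (Fin N → ℝ)) (i : Fin N) :
    fderiv ℝ (fun q : (Fin N → ℝ) × (Fin N → ℝ) => f q.1 q.2) P d i
      = ∑ j : Fin N, Du f P.1 P.2 i j * d.1 j + ∑ j : Fin N, Dp f P.1 P.2 i j * d.2 j := by
  set D := fderiv ℝ (fun q : (Fin N → ℝ) × (Fin N → ℝ) => f q.1 q.2) P with hD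
  have hdecomp : d = (∑ j : Fin N, d.1 j • ((Pi.single j (1:ℝ), (0 : Fin N → ℝ)) : (Fin N → ℝ) × (Fin N → ℝ)))
      + ∑ j : Fin N, d.2 j • (((0 : Fin N → ℝ), Pi.single j (1:ℝ)) : (Fin N → ℝ) × (Fin N → ℝ)) := by
    apply Prod.ext <;> simp [Prod.fst_sum, Prod.snd_sum] <;>
      exact aux_pi_decomp _
  calc D d i = (D ((∑ j : Fin N, d.1 j • ((Pi.single j (1:ℝ), (0 : Fin N → ℝ)) : (Fin N → ℝ) × (Fin N → ℝ)))
      + ∑ j : Fin N, d.2 j • (((0 : Fin N → ℝ), Pi.single j (1:ℝ)) : (Fin N → ℝ) × (Fin N → ℝ)))) i := by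
        rw [← hdecomp]
    _ = ∑ j : Fin N, Du f P.1 P.2 i j * d.1 j + ∑ j : Fin N, Dp f P.1 P.2 i j * d.2 j := by
        rw [map_add, map_sum, map_sum]
        simp only [_root_.map_smul, Pi.add_apply, Finset.sum_apply, Pi.smul_apply, smul_eq_mul]
        have h1 : ∀ j, Du f P.1 P.2 i j = D (Pi.single j 1, 0) i := fun j =>
          aux_fderiv_partial_fst hf P.1 P.2 i j
        have h2 : ∀ j, Dp f P.1 P.2 i j = D (0, Pi.single j 1) i := fun j =>
          aux_fderiv_partial_snd hf P.1 P.2 i j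
        simp [h1, h2, mul_comm]

lemma aux_entry_bound {N : ℕ} {f : (Fin N → ℝ) → (Fin N → ℝ) → Fin N → ℝ}
    (hf : ContDiff ℝ 1 (fun q : (Fin N → ℝ) × (Fin N → ℝ) => f q.1 q.2))
    (P : (Fin N → ℝ) × (Fin N → ℝ)) {L : ℝ}
    (hL : ‖fderiv ℝ (fun q : (Fin N → ℝ) × (Fin N → ℝ) => f q.1 q.2) P‖ ≤ L)
    (i j : Fin N) : |Du f P.1 P.2 i j| ≤ L ∧ |Dp f P.1 P.2 i j| ≤ L := by
  set D := fderiv ℝ (fun q : (Fin N → ℝ) × (Fin N → ℝ) => f q.1 q.2) P with hD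
  have key : ∀ z : (Fin N → ℝ) × (Fin N → ℝ), ‖z‖ ≤ 1 → |D z i| ≤ L := by
    intro z hz
    calc |D z i| ≤ ‖D z‖ := by
          simpa using norm_le_pi_norm (D z) i
      _ ≤ ‖D‖ * ‖z‖ := D.le_opNorm z
      _ ≤ L * 1 := by
          apply mul_le_mul hL hz (norm_nonneg _) (le_trans (norm_nonneg _) hL)
      _ = L := mul_one L
  constructor
  · rw [aux_fderiv_partial_fst hf P.1 P.2 i j]
    exact key _ (by rw [Prod.norm_def]; simp [Pi.norm_single])
  · rw [aux_fderiv_partial_snd hf P.1 P.2 i j]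
    exact key _ (by rw [Prod.norm_def]; simp [Pi.norm_single])

lemma aux_mvt {N : ℕ} {f : (Fin N → ℝ) → (Fin N → ℝ) → Fin N → ℝ}
    (hf : ContDiff ℝ 1 (fun q : (Fin N → ℝ) × (Fin N → ℝ) => f q.1 q.2))
    (a₁ b₁ a₂ b₂ : Fin N → ℝ) (i : Fin N) :
    ∃ P : (Fin N → ℝ) × (Fin N → ℝ),
      (∃ θ ∈ Set.Icc (0:ℝ) 1, P = (1 - θ) • ((a₂, b₂) : (Fin N → ℝ) × (Fin N → ℝ)) + θ • ((a₁, b₁) : (Fin N → ℝ) × (Fin N → ℝ))) ∧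
      f a₁ b₁ i - f a₂ b₂ i
        = ∑ j : Fin N, Du f P.1 P.2 i j * (a₁ j - a₂ j)
          + ∑ j : Fin N, Dp f P.1 P.2 i j * (b₁ j - b₂ j) := by
  set F2 := fun q : (Fin N → ℝ) × (Fin N → ℝ) => f q.1 q.2 with hF2
  set c₀ : (Fin N → ℝ) × (Fin N → ℝ) := (a₂, b₂) with hc₀
  set d : (Fin N → ℝ) × (Fin N → ℝ) := (a₁ - a₂, b₁ - b₂) with hd
  set line := fun s : ℝ => c₀ + s • d with hline
  have hg : ∀ s : ℝ, HasDerivAt (fun s' => F2 (line s') i)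
      (fderiv ℝ F2 (line s) d i) s := by
    intro s
    have h1 : HasDerivAt line d s := by
      have := ((hasDerivAt_id s).smul_const d).const_add c₀
      simpa [hline] using this
    have h2 : HasFDerivAt F2 (fderiv ℝ F2 (line s)) (line s) :=
      ((hf.differentiable one_ne_zero) (line s)).hasFDerivAt
    exact aux_hasDerivAt_apply (h2.comp_hasDerivAt s h1) i
  obtain ⟨θ, hθ, heq⟩ := exists_hasDerivAt_eq_slope (fun s => F2 (line s) i)
    (fun s => fderiv ℝ F2 (line s) d i) one_pos
    (fun s _ => (hg s).continuousAt.continuousWithinAt)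
    (fun s _ => hg s)
  refine ⟨line θ, ⟨θ, Set.mem_Icc_of_Ioo hθ, ?_⟩, ?_⟩
  · simp only [hline, hc₀, hd]
    apply Prod.ext <;> simp [smul_sub, sub_smul] <;> module
  · have h0 : line 0 = c₀ := by simp [hline]
    have h1 : line 1 = (a₁, b₁) := by
      simp only [hline, hc₀, hd, one_smul]
      apply Prod.ext <;> simp
    rw [aux_fderiv_decomp hf (line θ) d i] at heq
    have : f a₁ b₁ i - f a₂ b₂ i = (F2 (line 1) i - F2 (line 0) i) / (1 - 0) := by
      rw [h0, h1]; simp [hF2, hc₀]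
    rw [this, ← heq, hd]
    simp [Pi.sub_apply]

set_option maxHeartbeats 1000000 in
/-- comparison principle for the quasimonotone
reaction–diffusion–convection system u_t = A u_xx + f(u, u_x): if u is a
subsolution and v a supersolution with u(·,0) ≤ v(·,0) componentwise, then
u ≤ v componentwise on ℝ × [0,T]. -/
theorem comparison_principle
    (N : ℕ) (hN : 1 ≤ N)
    (A : Matrix (Fin N) (Fin N) ℝ)
    (hAdiag : ∀ i j, i ≠ j → A i j = 0) (hApos : ∀ i, 0 < A i i)
    (f : (Fin N → ℝ) → (Fin N → ℝ) → Fin N → ℝ)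
    (hf : ContDiff ℝ 1 (fun q : (Fin N → ℝ) × (Fin N → ℝ) => f q.1 q.2))
    -- quasimonotonicity
    (hquasi : ∀ (w p : Fin N → ℝ) (i j : Fin N), i ≠ j →
      0 ≤ Du f w p i j ∧ Dp f w p i j = 0)
    (T : ℝ) (hT : 0 < T)
    (u v : ℝ → ℝ → Fin N → ℝ)
    (huc : ContinuousOn (fun q : ℝ × ℝ => u q.1 q.2) (Set.univ ×ˢ Set.Icc 0 T))
    (hvc : ContinuousOn (fun q : ℝ × ℝ => v q.1 q.2) (Set.univ ×ˢ Set.Icc 0 T))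
    (hubdd : ∃ M, ∀ x : ℝ, ∀ t ∈ Set.Icc (0 : ℝ) T,
      ‖u x t‖ ≤ M ∧ ‖deriv (fun y => u y t) x‖ ≤ M)
    (hvbdd : ∃ M, ∀ x : ℝ, ∀ t ∈ Set.Icc (0 : ℝ) T,
      ‖v x t‖ ≤ M ∧ ‖deriv (fun y => v y t) x‖ ≤ M)
    (hut : ∀ x : ℝ, ∀ t ∈ Set.Ioc (0 : ℝ) T, DifferentiableAt ℝ (fun s => u x s) t)
    (hvt : ∀ x : ℝ, ∀ t ∈ Set.Ioc (0 : ℝ) T, DifferentiableAt ℝ (fun s => v x s) t)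
    (hux : ∀ t ∈ Set.Ioc (0 : ℝ) T, ContDiff ℝ 2 (fun y => u y t))
    (hvx : ∀ t ∈ Set.Ioc (0 : ℝ) T, ContDiff ℝ 2 (fun y => v y t))
    -- u is a subsolution, v a supersolution (componentwise)
    (hsub : ∀ x : ℝ, ∀ t ∈ Set.Ioc (0 : ℝ) T, ∀ i : Fin N,
      deriv (fun s => u x s) t i ≤
        (A.mulVec (deriv (deriv (fun y => u y t)) x)
          + f (u x t) (deriv (fun y => u y t) x)) i)
    (hsup : ∀ x : ℝ, ∀ t ∈ Set.Ioc (0 : ℝ) T, ∀ i : Fin N,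
      (A.mulVec (deriv (deriv (fun y => v y t)) x)
        + f (v x t) (deriv (fun y => v y t) x)) i ≤
        deriv (fun s => v x s) t i)
    (hinit : ∀ x : ℝ, ∀ i : Fin N, u x 0 i ≤ v x 0 i) :
    ∀ x : ℝ, ∀ t ∈ Set.Icc (0 : ℝ) T, ∀ i : Fin N, u x t i ≤ v x t i := by
  classical
  obtain ⟨Mu, hMu⟩ := hubdd
  obtain ⟨Mv, hMv⟩ := hvbdd
  set M : ℝ := max Mu Mv with hMdef
  have hMu' : ∀ x : ℝ, ∀ t ∈ Set.Icc (0:ℝ) T,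
      ‖u x t‖ ≤ M ∧ ‖deriv (fun y => u y t) x‖ ≤ M := fun x t ht =>
    ⟨(hMu x t ht).1.trans (le_max_left _ _), (hMu x t ht).2.trans (le_max_left _ _)⟩
  have hMv' : ∀ x : ℝ, ∀ t ∈ Set.Icc (0:ℝ) T,
      ‖v x t‖ ≤ M ∧ ‖deriv (fun y => v y t) x‖ ≤ M := fun x t ht =>
    ⟨(hMv x t ht).1.trans (le_max_right _ _), (hMv x t ht).2.trans (le_max_right _ _)⟩
  have hM0 : 0 ≤ M := le_trans (norm_nonneg (u 0 0)) (hMu' 0 0 ⟨le_rfl, hT.le⟩).1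
  -- operator norm bound L on the ball of radius M
  set F2 := fun q : (Fin N → ℝ) × (Fin N → ℝ) => f q.1 q.2 with hF2def
  obtain ⟨L₀, hL₀⟩ := (isCompact_closedBall (0 : (Fin N → ℝ) × (Fin N → ℝ)) M).exists_bound_of_continuousOn
    ((hf.continuous_fderiv one_ne_zero).continuousOn)
  set L : ℝ := max L₀ 0 with hLdef
  have hL0 : 0 ≤ L := le_max_right _ _
  have hL : ∀ P : (Fin N → ℝ) × (Fin N → ℝ), ‖P‖ ≤ M → ‖fderiv ℝ F2 P‖ ≤ L := by
    intro P hP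
    exact (hL₀ P (mem_closedBall_zero_iff.mpr hP)).trans (le_max_left _ _)
  -- bound on diagonal of A
  haveI : Nonempty (Fin N) := ⟨⟨0, hN⟩⟩
  obtain ⟨i₀, hi₀⟩ := Finite.exists_max (fun i : Fin N => A i i)
  set Amax : ℝ := A i₀ i₀ with hAmaxdef
  have hAmax0 : 0 ≤ Amax := (hApos i₀).le
  have hAmax : ∀ i, A i i ≤ Amax := hi₀
  set K : ℝ := 2*Amax + (N:ℝ)*L + 2*L + 1 with hKdef
  have hK0 : 0 ≤ K := by positivity
  -- clamping
  set cl : ℝ → ℝ := fun t => max 0 (min t T) with hcldef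
  have hclmem : ∀ t, cl t ∈ Set.Icc (0:ℝ) T := fun t =>
    ⟨le_max_left _ _, max_le hT.le (min_le_right _ _)⟩
  have hcl_eq : ∀ t ∈ Set.Icc (0:ℝ) T, cl t = t := fun t ht => by
    simp [hcldef, min_eq_left ht.2, max_eq_right ht.1]
  have hclcont : Continuous cl := continuous_const.max (continuous_id.min continuous_const)
  -- MAIN claim
  have MAIN : ∀ ε > (0:ℝ), ∀ x : ℝ, ∀ t ∈ Set.Icc (0:ℝ) T, ∀ j : Fin N,
      u x t j - v x t j < ε * (1 + x^2) * Real.exp (K*t) := by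
    intro ε hε
    by_contra hcon
    push_neg at hcon
    obtain ⟨xb, tb, htb, jb, hgeb⟩ := hcon
    set φ : ℝ → ℝ → ℝ := fun x t => ε * (1 + x^2) * Real.exp (K*t) with hφdef
    have hφpos : ∀ x t, 0 < φ x t := fun x t => by positivity
    have hφcont : Continuous (fun q : ℝ × ℝ => φ q.1 q.2) :=
      (continuous_const.mul (continuous_const.add (continuous_fst.pow 2))).mul
        (Real.continuous_exp.comp (continuous_const.mul continuous_snd))
    set W : Fin N → ℝ × ℝ → ℝ := fun j q => u q.1 (cl q.2) j - v q.1 (cl q.2) j with hWdef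
    have hucl : Continuous (fun q : ℝ × ℝ => u q.1 (cl q.2)) := by
      rw [← continuousOn_univ]
      exact huc.comp (continuous_fst.prodMk (hclcont.comp continuous_snd)).continuousOn
        (fun q _ => ⟨trivial, hclmem q.2⟩)
    have hvcl : Continuous (fun q : ℝ × ℝ => v q.1 (cl q.2)) := by
      rw [← continuousOn_univ]
      exact hvc.comp (continuous_fst.prodMk (hclcont.comp continuous_snd)).continuousOn
        (fun q _ => ⟨trivial, hclmem q.2⟩)
    have hWcont : ∀ j, Continuous (W j) := fun j =>
      ((continuous_apply j).comp hucl).sub ((continuous_apply j).comp hvcl)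
    have hWbdd : ∀ j q, W j q ≤ 2*M := by
      intro j q
      have h1 : u q.1 (cl q.2) j ≤ M := by
        have := norm_le_pi_norm (u q.1 (cl q.2)) j
        rw [Real.norm_eq_abs] at this
        linarith [(hMu' q.1 (cl q.2) (hclmem q.2)).1, abs_le.mp
          (this.trans (hMu' q.1 (cl q.2) (hclmem q.2)).1) |>.2]
      have h2 : -M ≤ v q.1 (cl q.2) j := by
        have := norm_le_pi_norm (v q.1 (cl q.2)) j
        rw [Real.norm_eq_abs] at this
        linarith [abs_le.mp (this.trans (hMv' q.1 (cl q.2) (hclmem q.2)).1) |>.1]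
      simp only [hWdef]
      linarith
    set E : Set (ℝ × ℝ) := {q | q.2 ∈ Set.Icc (0:ℝ) T ∧ ∃ j, φ q.1 q.2 ≤ W j q} with hEdef
    have hEclosed : IsClosed E := by
      have : E = (Prod.snd ⁻¹' Set.Icc (0:ℝ) T) ∩ ⋃ j, {q : ℝ × ℝ | φ q.1 q.2 ≤ W j q} := by
        ext q; simp [hEdef, Set.mem_iUnion]
      rw [this]
      exact (isClosed_Icc.preimage continuous_snd).inter
        (isClosed_iUnion_of_finite fun j => isClosed_le hφcont (hWcont j))
    have hEsub : E ⊆ Set.Icc (-(1 + 2*M/ε)) (1 + 2*M/ε) ×ˢ Set.Icc (0:ℝ) T := by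
      rintro ⟨x, t⟩ ⟨ht, j, hj⟩
      have hb : φ x t ≤ 2*M := hj.trans (hWbdd j (x, t))
      have hexp1 : (1:ℝ) ≤ Real.exp (K*t) := Real.one_le_exp (mul_nonneg hK0 ht.1)
      have hx2 : 1 + x^2 ≤ 2*M/ε := by
        rw [le_div_iff₀ hε]
        have h1 : ε * (1 + x^2) * 1 ≤ φ x t := by
          simp only [hφdef]
          have : 0 < ε * (1 + x^2) := by positivity
          nlinarith
        nlinarith
      have habs : |x| ≤ 1 + 2*M/ε := by
        nlinarith [abs_nonneg x, sq_abs x, sq_nonneg (|x| - 1)]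
      exact ⟨abs_le.mp habs, ht⟩
    have hEcpt : IsCompact E := IsCompact.of_isClosed_subset
      (isCompact_Icc.prod isCompact_Icc) hEclosed hEsub
    have hEne : E.Nonempty := ⟨(xb, tb), htb, jb, by
      simp only [hWdef]; rw [hcl_eq tb htb]; exact hgeb⟩
    obtain ⟨q₀, hq₀E, hq₀min⟩ := hEcpt.exists_isMinOn hEne continuous_snd.continuousOn
    obtain ⟨x₀, t₀⟩ := q₀
    have ht₀Icc : t₀ ∈ Set.Icc (0:ℝ) T := hq₀E.1
    have hmin : ∀ q ∈ E, t₀ ≤ q.2 := fun q hq => hq₀min hq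
    have ht₀pos : 0 < t₀ := by
      rcases lt_or_eq_of_le ht₀Icc.1 with h | h
      · exact h
      · exfalso
        obtain ⟨j, hj⟩ := hq₀E.2
        have hcl0 : cl t₀ = t₀ := hcl_eq t₀ ht₀Icc
        simp only [hWdef, hcl0] at hj
        have h1 : u x₀ t₀ j - v x₀ t₀ j ≤ 0 := by
          rw [← h]; linarith [hinit x₀ j]
        linarith [hφpos x₀ t₀]
    have ht₀ : t₀ ∈ Set.Ioc (0:ℝ) T := ⟨ht₀pos, ht₀Icc.2⟩
    -- before t₀ everything is strictly below φ
    have hlt : ∀ x : ℝ, ∀ t, 0 ≤ t → t < t₀ → ∀ j, u x t j - v x t j < φ x t := by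
      intro x t ht0 htt j
      by_contra hcon2
      push_neg at hcon2
      have htmem : t ∈ Set.Icc (0:ℝ) T := ⟨ht0, htt.le.trans ht₀Icc.2⟩
      have : ((x, t) : ℝ × ℝ) ∈ E := ⟨htmem, j, by
        simp only [hWdef]; rw [hcl_eq t htmem]; exact hcon2⟩
      exact absurd (hmin _ this) (not_le.mpr htt)
    -- at time t₀ everything is ≤ φ
    have hCLE : ∀ x : ℝ, ∀ j, u x t₀ j - v x t₀ j ≤ φ x t₀ := by
      intro x j
      by_contra hcon2
      push_neg at hcon2
      have hg : Continuous fun t => W j (x, t) - φ x t :=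
        ((hWcont j).comp (Continuous.prodMk_right x)).sub
          ((hφcont.comp (Continuous.prodMk_right x)))
      have hpos0 : 0 < W j (x, t₀) - φ x t₀ := by
        have : W j (x, t₀) = u x t₀ j - v x t₀ j := by
          simp only [hWdef]; rw [hcl_eq t₀ ht₀Icc]
        rw [this]; linarith
      have hev : ∀ᶠ t in 𝓝[<] t₀, 0 < W j (x, t) - φ x t :=
        ((hg.tendsto t₀).eventually_const_lt hpos0).filter_mono nhdsWithin_le_nhds
      have hev2 : ∀ᶠ t in 𝓝[<] t₀, 0 < t :=
        (eventually_gt_nhds ht₀pos).filter_mono nhdsWithin_le_nhds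
      obtain ⟨t, h1, h2, h3⟩ := (hev.and (hev2.and self_mem_nhdsWithin)).exists
      have htmem : t ∈ Set.Icc (0:ℝ) T := ⟨h2.le, (le_of_lt h3).trans ht₀Icc.2⟩
      have hW : W j (x, t) = u x t j - v x t j := by
        simp only [hWdef]; rw [hcl_eq t htmem]
      rw [hW] at h1
      exact absurd (hlt x t h2.le h3 j) (not_lt.mpr (by linarith))
    -- the touching component
    obtain ⟨i₁, hi₁⟩ := hq₀E.2
    have hi₁' : φ x₀ t₀ ≤ u x₀ t₀ i₁ - v x₀ t₀ i₁ := by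
      simp only [hWdef] at hi₁; rwa [hcl_eq t₀ ht₀Icc] at hi₁
    have heq : u x₀ t₀ i₁ - v x₀ t₀ i₁ = φ x₀ t₀ := le_antisymm (hCLE x₀ i₁) hi₁'
    -- abbreviations
    set c : ℝ := ε * Real.exp (K*t₀) with hcdef
    have hcpos : 0 < c := by positivity
    have hφc : ∀ x : ℝ, φ x t₀ = c * (1 + x^2) := fun x => by
      simp only [hφdef, hcdef]; ring
    set U : Fin N → ℝ := u x₀ t₀ with hUdef
    set V : Fin N → ℝ := v x₀ t₀ with hVdef
    set pu : Fin N → ℝ := deriv (fun y => u y t₀) x₀ with hpudef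
    set pv : Fin N → ℝ := deriv (fun y => v y t₀) x₀ with hpvdef
    set qu : Fin N → ℝ := deriv (deriv (fun y => u y t₀)) x₀ with hqudef
    set qv : Fin N → ℝ := deriv (deriv (fun y => v y t₀)) x₀ with hqvdef
    have huC2 : ContDiff ℝ 2 (fun y => u y t₀) := hux t₀ ht₀
    have hvC2 : ContDiff ℝ 2 (fun y => v y t₀) := hvx t₀ ht₀
    -- spatial analysis
    have SPACE : pu i₁ - pv i₁ = c * (2*x₀) ∧ qu i₁ - qv i₁ ≤ 2*c := by
      have hud : Differentiable ℝ (fun y => u y t₀) := huC2.differentiable (by norm_num)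
      have hvd : Differentiable ℝ (fun y => v y t₀) := hvC2.differentiable (by norm_num)
      have huC2i : ContDiff ℝ 2 (fun x : ℝ => u x t₀ i₁) :=
        (ContinuousLinearMap.proj (R := ℝ) (φ := fun _ : Fin N => ℝ) i₁).contDiff.comp huC2
      have hvC2i : ContDiff ℝ 2 (fun x : ℝ => v x t₀ i₁) :=
        (ContinuousLinearMap.proj (R := ℝ) (φ := fun _ : Fin N => ℝ) i₁).contDiff.comp hvC2
      set G : ℝ → ℝ := fun x => u x t₀ i₁ - v x t₀ i₁ - c*(1+x^2) with hGdef
      have hGC2 : ContDiff ℝ 2 G := (huC2i.sub hvC2i).sub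
        (contDiff_const.mul (contDiff_const.add (contDiff_id.pow 2)))
      have hGmax : ∀ x, G x ≤ G x₀ := by
        intro x
        have h1 := hCLE x i₁
        rw [hφc x] at h1
        have h2 := heq
        rw [hφc x₀] at h2
        simp only [hGdef]
        linarith
      have hpoly : ∀ x : ℝ, HasDerivAt (fun y : ℝ => c*(1+y^2)) (c*(2*x)) x := fun x => by
        simpa using ((hasDerivAt_pow 2 x).const_add 1).const_mul c
      have hG' : ∀ x : ℝ, HasDerivAt G
          (deriv (fun y => u y t₀) x i₁ - deriv (fun y => v y t₀) x i₁ - c*(2*x)) x := fun x =>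
        ((aux_hasDerivAt_apply (hud x).hasDerivAt i₁).sub
          (aux_hasDerivAt_apply (hvd x).hasDerivAt i₁)).sub (hpoly x)
      have hG'0 : deriv G x₀ = 0 :=
        IsLocalMax.deriv_eq_zero (Filter.Eventually.of_forall hGmax)
      have h1 : pu i₁ - pv i₁ = c*(2*x₀) := by
        have hx := (hG' x₀).deriv
        rw [hG'0] at hx
        simp only [hpudef, hpvdef]
        linarith
      have hG'' : deriv (deriv G) x₀ ≤ 0 := aux_second_deriv_nonpos hGC2 hGmax
      have hGderiv : deriv G = fun x =>
          deriv (fun y => u y t₀) x i₁ - deriv (fun y => v y t₀) x i₁ - c*(2*x) :=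
        funext fun x => (hG' x).deriv
      have hdu2 : Differentiable ℝ (deriv (fun y => u y t₀)) := by
        have := (contDiff_succ_iff_deriv (n := 1)).mp (by norm_num at huC2 ⊢; exact huC2)
        exact this.2.2.differentiable one_ne_zero
      have hdv2 : Differentiable ℝ (deriv (fun y => v y t₀)) := by
        have := (contDiff_succ_iff_deriv (n := 1)).mp (by norm_num at hvC2 ⊢; exact hvC2)
        exact this.2.2.differentiable one_ne_zero
      have hqu' : HasDerivAt (fun x => deriv (fun y => u y t₀) x i₁) (qu i₁) x₀ :=
        aux_hasDerivAt_apply (hdu2 x₀).hasDerivAt i₁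
      have hqv' : HasDerivAt (fun x => deriv (fun y => v y t₀) x i₁) (qv i₁) x₀ :=
        aux_hasDerivAt_apply (hdv2 x₀).hasDerivAt i₁
      have hlin : HasDerivAt (fun x : ℝ => c*(2*x)) (c*2) x₀ := by
        simpa using ((hasDerivAt_id x₀).const_mul 2).const_mul c
      have hG2 : HasDerivAt (deriv G) (qu i₁ - qv i₁ - c*2) x₀ := by
        rw [hGderiv]
        exact (hqu'.sub hqv').sub hlin
      have h2 := hG2.deriv
      rw [h2] at hG''
      exact ⟨h1, by linarith⟩
    -- time analysis
    have TIME : K * φ x₀ t₀ ≤ deriv (fun s => u x₀ s) t₀ i₁ - deriv (fun s => v x₀ s) t₀ i₁ := by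
      set g : ℝ → ℝ := fun t => u x₀ t i₁ - v x₀ t i₁ - ε*(1+x₀^2)*Real.exp (K*t) with hgdef
      have hU : HasDerivAt (fun t => u x₀ t i₁) (deriv (fun s => u x₀ s) t₀ i₁) t₀ :=
        aux_hasDerivAt_apply (hut x₀ t₀ ht₀).hasDerivAt i₁
      have hV : HasDerivAt (fun t => v x₀ t i₁) (deriv (fun s => v x₀ s) t₀ i₁) t₀ :=
        aux_hasDerivAt_apply (hvt x₀ t₀ ht₀).hasDerivAt i₁
      have hexp : HasDerivAt (fun t : ℝ => ε*(1+x₀^2)*Real.exp (K*t))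
          (ε*(1+x₀^2)*(Real.exp (K*t₀)*K)) t₀ := by
        have h1 : HasDerivAt (fun t : ℝ => K*t) K t₀ := by
          simpa using (hasDerivAt_id t₀).const_mul K
        exact h1.exp.const_mul (ε*(1+x₀^2))
      have hg' : HasDerivAt g
          (deriv (fun s => u x₀ s) t₀ i₁ - deriv (fun s => v x₀ s) t₀ i₁
            - ε*(1+x₀^2)*(Real.exp (K*t₀)*K)) t₀ := (hU.sub hV).sub hexp
      have hgt0 : g t₀ = 0 := by
        have h2 : φ x₀ t₀ = ε * (1 + x₀^2) * Real.exp (K*t₀) := by simp only [hφdef]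
        simp only [hgdef]
        linarith [heq, h2.symm.le, h2.le]
      have hmax : ∀ᶠ t in 𝓝[<] t₀, g t ≤ g t₀ := by
        have hev2 : ∀ᶠ t in 𝓝[<] t₀, 0 < t :=
          (eventually_gt_nhds ht₀pos).filter_mono nhdsWithin_le_nhds
        filter_upwards [hev2, self_mem_nhdsWithin] with t h0 hlt'
        have h3 := hlt x₀ t h0.le hlt' i₁
        have h4 : φ x₀ t = ε * (1 + x₀^2) * Real.exp (K*t) := by simp only [hφdef]
        rw [hgt0]
        simp only [hgdef]
        linarith [h4.le, h4.symm.le]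
      have h0 : 0 ≤ deriv g t₀ := aux_left_deriv_nonneg hg'.differentiableAt hmax
      rw [hg'.deriv] at h0
      have hKφ : ε*(1+x₀^2)*(Real.exp (K*t₀)*K) = K * φ x₀ t₀ := by
        simp only [hφdef]; ring
      linarith
    -- PDE inequalities
    have PDE : deriv (fun s => u x₀ s) t₀ i₁ - deriv (fun s => v x₀ s) t₀ i₁
        ≤ A i₁ i₁ * (qu i₁ - qv i₁) + (f U pu i₁ - f V pv i₁) := by
      have hmv : ∀ s : Fin N → ℝ, A.mulVec s i₁ = A i₁ i₁ * s i₁ := by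
        intro s
        simp only [Matrix.mulVec, dotProduct]
        exact Finset.sum_eq_single i₁
          (fun b _ hb => by rw [hAdiag i₁ b (Ne.symm hb), zero_mul]) (by simp)
      have h1 := hsub x₀ t₀ ht₀ i₁
      have h2 := hsup x₀ t₀ ht₀ i₁
      rw [Pi.add_apply, hmv] at h1 h2
      linarith
    -- mean value estimate
    have MVT : f U pu i₁ - f V pv i₁ ≤ ((N:ℝ)*L + 2*L) * φ x₀ t₀ := by
      obtain ⟨P, ⟨θ, hθ, hP⟩, hrep⟩ := aux_mvt hf U pu V pv i₁
      have hUV : ‖((V, pv) : (Fin N → ℝ) × (Fin N → ℝ))‖ ≤ M := by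
        rw [Prod.norm_def]
        exact max_le (hMv' x₀ t₀ ht₀Icc).1 (hMv' x₀ t₀ ht₀Icc).2
      have hUU : ‖((U, pu) : (Fin N → ℝ) × (Fin N → ℝ))‖ ≤ M := by
        rw [Prod.norm_def]
        exact max_le (hMu' x₀ t₀ ht₀Icc).1 (hMu' x₀ t₀ ht₀Icc).2
      have hPM : ‖P‖ ≤ M := by
        rw [hP]
        have hθ1 : (0:ℝ) ≤ 1 - θ := by linarith [hθ.2]
        calc ‖(1-θ) • ((V, pv) : (Fin N → ℝ) × (Fin N → ℝ))
              + θ • ((U, pu) : (Fin N → ℝ) × (Fin N → ℝ))‖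
            ≤ ‖(1-θ) • ((V, pv) : (Fin N → ℝ) × (Fin N → ℝ))‖
              + ‖θ • ((U, pu) : (Fin N → ℝ) × (Fin N → ℝ))‖ := norm_add_le _ _
          _ = (1-θ) * ‖((V, pv) : (Fin N → ℝ) × (Fin N → ℝ))‖
              + θ * ‖((U, pu) : (Fin N → ℝ) × (Fin N → ℝ))‖ := by
              rw [norm_smul, norm_smul, Real.norm_eq_abs, Real.norm_eq_abs,
                abs_of_nonneg hθ1, abs_of_nonneg hθ.1]
          _ ≤ (1-θ) * M + θ * M := by
              have ha := mul_le_mul_of_nonneg_left hUV hθ1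
              have hb := mul_le_mul_of_nonneg_left hUU hθ.1
              linarith
          _ = M := by ring
      have hLP : ‖fderiv ℝ (fun q : (Fin N → ℝ) × (Fin N → ℝ) => f q.1 q.2) P‖ ≤ L := hL P hPM
      have hentry := fun j => aux_entry_bound hf P hLP i₁ j
      have hφ0 := (hφpos x₀ t₀).le
      have hsum1 : ∑ j : Fin N, Du f P.1 P.2 i₁ j * (U j - V j) ≤ (N:ℝ) * L * φ x₀ t₀ := by
        have hterm : ∀ j, Du f P.1 P.2 i₁ j * (U j - V j) ≤ L * φ x₀ t₀ := by
          intro j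
          by_cases hji : j = i₁
          · subst hji
            rw [heq]
            calc Du f P.1 P.2 j j * φ x₀ t₀ ≤ |Du f P.1 P.2 j j| * φ x₀ t₀ :=
                mul_le_mul_of_nonneg_right (le_abs_self _) hφ0
              _ ≤ L * φ x₀ t₀ := mul_le_mul_of_nonneg_right (hentry j).1 hφ0
          · have hq := hquasi P.1 P.2 i₁ j (fun h => hji h.symm)
            calc Du f P.1 P.2 i₁ j * (U j - V j) ≤ Du f P.1 P.2 i₁ j * φ x₀ t₀ :=
                mul_le_mul_of_nonneg_left (hCLE x₀ j) hq.1
              _ ≤ L * φ x₀ t₀ :=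
                mul_le_mul_of_nonneg_right ((le_abs_self _).trans (hentry j).1) hφ0
        calc ∑ j : Fin N, Du f P.1 P.2 i₁ j * (U j - V j)
            ≤ ∑ _j : Fin N, L * φ x₀ t₀ := Finset.sum_le_sum (fun j _ => hterm j)
          _ = (N:ℝ) * L * φ x₀ t₀ := by
              rw [Finset.sum_const, Finset.card_univ, Fintype.card_fin, nsmul_eq_mul]
              ring
      have hsum2 : ∑ j : Fin N, Dp f P.1 P.2 i₁ j * (pu j - pv j) ≤ 2*L*φ x₀ t₀ := by
        have heqsum : ∑ j : Fin N, Dp f P.1 P.2 i₁ j * (pu j - pv j)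
            = Dp f P.1 P.2 i₁ i₁ * (pu i₁ - pv i₁) := Finset.sum_eq_single i₁
          (fun b _ hb => by rw [(hquasi P.1 P.2 i₁ b (Ne.symm hb)).2, zero_mul]) (by simp)
        rw [heqsum, SPACE.1]
        have hxb : |x₀| ≤ 1 + x₀^2 := by
          nlinarith [sq_abs x₀, sq_nonneg (|x₀| - 1), abs_nonneg x₀]
        have h1 : |c*(2*x₀)| ≤ 2*c*(1+x₀^2) := by
          rw [abs_mul, abs_of_nonneg hcpos.le, abs_mul,
            abs_of_nonneg (by norm_num : (0:ℝ) ≤ 2)]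
          nlinarith [hxb, hcpos.le, mul_le_mul_of_nonneg_left hxb hcpos.le]
        calc Dp f P.1 P.2 i₁ i₁ * (c*(2*x₀)) ≤ |Dp f P.1 P.2 i₁ i₁ * (c*(2*x₀))| :=
            le_abs_self _
          _ = |Dp f P.1 P.2 i₁ i₁| * |c*(2*x₀)| := abs_mul _ _
          _ ≤ L * (2*c*(1+x₀^2)) := mul_le_mul (hentry i₁).2 h1 (abs_nonneg _) hL0
          _ = 2*L*φ x₀ t₀ := by rw [hφc x₀]; ring
      rw [hrep]
      have hring : (N:ℝ) * L * φ x₀ t₀ + 2*L*φ x₀ t₀ = ((N:ℝ)*L + 2*L) * φ x₀ t₀ := by ring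
      linarith
    -- combine
    have hA : A i₁ i₁ * (qu i₁ - qv i₁) ≤ 2*Amax * φ x₀ t₀ := by
      have h1 : A i₁ i₁ * (qu i₁ - qv i₁) ≤ A i₁ i₁ * (2*c) :=
        mul_le_mul_of_nonneg_left SPACE.2 (hApos i₁).le
      have h2 : A i₁ i₁ * (2*c) ≤ Amax * (2*c) :=
        mul_le_mul_of_nonneg_right (hAmax i₁) (by positivity)
      have h3 : Amax * (2*c) ≤ 2*Amax * φ x₀ t₀ := by
        rw [hφc x₀]
        have h4 : 0 ≤ 2*Amax*c*x₀^2 := by positivity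
        calc Amax * (2*c) = 2*Amax*c := by ring
          _ ≤ 2*Amax*c + 2*Amax*c*x₀^2 := by linarith
          _ = 2*Amax*(c*(1+x₀^2)) := by ring
      linarith
    have hfinal : K * φ x₀ t₀ ≤ (K - 1) * φ x₀ t₀ := by
      have hsumeq : 2*Amax * φ x₀ t₀ + ((N:ℝ)*L + 2*L) * φ x₀ t₀ = (K - 1) * φ x₀ t₀ := by
        rw [hKdef]; ring
      linarith [TIME, PDE, MVT, hA]
    have hdiff : K * φ x₀ t₀ - (K - 1) * φ x₀ t₀ = φ x₀ t₀ := by ring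
    linarith [hφpos x₀ t₀, hfinal, hdiff]
  -- conclusion from MAIN
  intro x t ht i
  by_contra hcc
  push_neg at hcc
  set δ : ℝ := u x t i - v x t i with hδdef
  have hδpos : 0 < δ := sub_pos.mpr hcc
  set C : ℝ := (1 + x^2) * Real.exp (K*t) with hCdef
  have hCpos : 0 < C := by positivity
  have := MAIN (δ / (2*C)) (by positivity) x t ht i
  rw [← hδdef] at this
  have : δ < δ / 2 := by
    calc δ < δ / (2*C) * (1 + x^2) * Real.exp (K*t) := this
    _ = δ / 2 := by field_simp [hCdef]; ring
  linarith
end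

section
/- Suppose f is quasimonotone: ∂f_i/∂u_j ≥ 0 for i ≠ j and ∂f_i/∂p_j = 0 for j ≠ i. Let E⁻, E⁺ ∈ ℝ^N satisfy f(E⁻, 0) = 0, f(E⁺, 0) = 0 and E⁻ ≤ E⁺ componentwise. If u is a bounded classical solution of u_t = A u_xx + f(u, u_x) on ℝ × [0, T] with bounded spatial derivative whose initial datum satisfies E⁻ ≤ u(x, 0) ≤ E⁺ componentwise for all x, then E⁻ ≤ u(x, t) ≤ E⁺ componentwise for all x ∈ ℝ and t ∈ [0, T]. -/
open Matrix Filter Topology Set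

/-- A bounded classical solution of u_t = A u_xx + f(u, u_x) on ℝ × [0, T]. -/
def IsBddClassicalSol {N : ℕ} (A : Matrix (Fin N) (Fin N) ℝ)
    (f : (Fin N → ℝ) → (Fin N → ℝ) → Fin N → ℝ) (T : ℝ)
    (u : ℝ → ℝ → Fin N → ℝ) : Prop :=
  ContinuousOn (fun q : ℝ × ℝ => u q.1 q.2) (Set.univ ×ˢ Set.Icc 0 T) ∧
  (∃ M, ∀ x : ℝ, ∀ t ∈ Set.Icc (0 : ℝ) T,
    ‖u x t‖ ≤ M ∧ ‖deriv (fun y => u y t) x‖ ≤ M) ∧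
  (∀ x : ℝ, ∀ t ∈ Set.Ioc (0 : ℝ) T, DifferentiableAt ℝ (fun s => u x s) t) ∧
  (∀ t ∈ Set.Ioc (0 : ℝ) T, ContDiff ℝ 2 (fun y => u y t)) ∧
  (∀ x : ℝ, ∀ t ∈ Set.Ioc (0 : ℝ) T, deriv (fun s => u x s) t =
    A.mulVec (deriv (deriv (fun y => u y t)) x)
      + f (u x t) (deriv (fun y => u y t) x))

section Helpers
variable {N : ℕ} {f : (Fin N → ℝ) → (Fin N → ℝ) → Fin N → ℝ}

lemma deriv_pi_apply (F : ℝ → Fin N → ℝ) {x : ℝ} (hF : DifferentiableAt ℝ F x)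
    (i : Fin N) : deriv (fun y => F y i) x = deriv F x i := by
  have h := (ContinuousLinearMap.proj (R := ℝ) (φ := fun _ : Fin N => ℝ) i).hasFDerivAt.comp_hasDerivAt x hF.hasDerivAt
  exact h.deriv

lemma hasDerivAt_pi_apply (F : ℝ → Fin N → ℝ) {x : ℝ} (hF : DifferentiableAt ℝ F x)
    (i : Fin N) : HasDerivAt (fun y => F y i) (deriv F x i) x := by
  have h := (ContinuousLinearMap.proj (R := ℝ) (φ := fun _ : Fin N => ℝ) i).hasFDerivAt.comp_hasDerivAt x hF.hasDerivAt
  exact h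

lemma deriv2_nonpos_of_isMaxOn {h : ℝ → ℝ} {a : ℝ} (hh : ContDiff ℝ 2 h)
    (hmax : ∀ y, h y ≤ h a) : deriv (deriv h) a ≤ 0 := by
  by_contra hpos
  push_neg at hpos
  have hd1 : deriv h a = 0 := IsLocalMax.deriv_eq_zero (Filter.Eventually.of_forall hmax)
  have hkey := (contDiff_succ_iff_deriv (n := 1)).mp (by norm_num at hh ⊢; exact hh)
  have hdh : Differentiable ℝ (deriv h) := hkey.2.2.differentiable one_ne_zero
  have hslope : Tendsto (slope (deriv h) a) (𝓝[≠] a) (𝓝 (deriv (deriv h) a)) :=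
    hasDerivAt_iff_tendsto_slope.mp (hdh a).hasDerivAt
  have h2 : ∀ᶠ y in 𝓝[>] a, 0 < slope (deriv h) a y := by
    have : ∀ᶠ y in 𝓝[≠] a, 0 < slope (deriv h) a y :=
      hslope.eventually (eventually_gt_nhds hpos)
    exact this.filter_mono (nhdsWithin_mono a fun y hy => ne_of_gt hy)
  obtain ⟨b, hab, hb⟩ := (nhdsGT_basis a).eventually_iff.mp h2
  have hderivpos : ∀ y ∈ Ioo a b, 0 < deriv h y := by
    intro y hy
    have := hb hy
    rw [slope_def_field] at this
    have h3 : 0 < (deriv h y - deriv h a) / (y - a) := by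
      simpa [div_eq_iff, sub_ne_zero] using this
    have h4 : 0 < y - a := sub_pos.mpr hy.1
    rcases div_pos_iff.mp h3 with ⟨hnum, _⟩ | ⟨_, hden⟩
    · linarith
    · linarith
  have hmono : StrictMonoOn h (Icc a b) := by
    apply strictMonoOn_of_deriv_pos (convex_Icc a b) (hh.continuous.continuousOn)
    intro y hy
    rw [interior_Icc] at hy
    exact hderivpos y hy
  have : h a < h b := hmono (left_mem_Icc.mpr hab.le) (right_mem_Icc.mpr hab.le) hab
  exact absurd (hmax b) (not_le.mpr this)

lemma hasFDerivAt_partial_fst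
    (hf : ContDiff ℝ 1 (fun q : (Fin N → ℝ) × (Fin N → ℝ) => f q.1 q.2))
    (w r : Fin N → ℝ) (i : Fin N) :
    HasFDerivAt (fun u' : Fin N → ℝ => f u' r i)
      (((ContinuousLinearMap.proj (R := ℝ) (φ := fun _ : Fin N => ℝ) i)).comp
        ((fderiv ℝ (fun q : (Fin N → ℝ) × (Fin N → ℝ) => f q.1 q.2) (w, r)).comp
          (ContinuousLinearMap.inl ℝ _ _))) w := by
  have hD := ((hf.differentiable one_ne_zero) (w, r)).hasFDerivAt
  exact ((ContinuousLinearMap.proj (R := ℝ) (φ := fun _ : Fin N => ℝ) i)).hasFDerivAt.comp w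
    (hD.comp (g := fun q : (Fin N → ℝ) × (Fin N → ℝ) => f q.1 q.2) w (hasFDerivAt_prodMk_left (𝕜 := ℝ) w r))

lemma hasFDerivAt_partial_snd
    (hf : ContDiff ℝ 1 (fun q : (Fin N → ℝ) × (Fin N → ℝ) => f q.1 q.2))
    (w r : Fin N → ℝ) (i : Fin N) :
    HasFDerivAt (fun p' : Fin N → ℝ => f w p' i)
      (((ContinuousLinearMap.proj (R := ℝ) (φ := fun _ : Fin N => ℝ) i)).comp
        ((fderiv ℝ (fun q : (Fin N → ℝ) × (Fin N → ℝ) => f q.1 q.2) (w, r)).comp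
          (ContinuousLinearMap.inr ℝ _ _))) r := by
  have hD := ((hf.differentiable one_ne_zero) (w, r)).hasFDerivAt
  exact ((ContinuousLinearMap.proj (R := ℝ) (φ := fun _ : Fin N => ℝ) i)).hasFDerivAt.comp r
    (hD.comp r (hasFDerivAt_prodMk_right w r))

lemma Du_eq (hf : ContDiff ℝ 1 (fun q : (Fin N → ℝ) × (Fin N → ℝ) => f q.1 q.2))
    (w r : Fin N → ℝ) (i j : Fin N) :
    Du f w r i j
      = fderiv ℝ (fun q : (Fin N → ℝ) × (Fin N → ℝ) => f q.1 q.2) (w, r) (Pi.single j 1, 0) i := by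
  rw [Du, (hasFDerivAt_partial_fst hf w r i).fderiv]
  simp

lemma Dp_eq (hf : ContDiff ℝ 1 (fun q : (Fin N → ℝ) × (Fin N → ℝ) => f q.1 q.2))
    (w r : Fin N → ℝ) (i j : Fin N) :
    Dp f w r i j
      = fderiv ℝ (fun q : (Fin N → ℝ) × (Fin N → ℝ) => f q.1 q.2) (w, r) (0, Pi.single j 1) i := by
  rw [Dp, (hasFDerivAt_partial_snd hf w r i).fderiv]
  simp

lemma fderiv_apply_decomp (hf : ContDiff ℝ 1 (fun q : (Fin N → ℝ) × (Fin N → ℝ) => f q.1 q.2))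
    (w r v s : Fin N → ℝ) (i : Fin N) :
    fderiv ℝ (fun q : (Fin N → ℝ) × (Fin N → ℝ) => f q.1 q.2) (w, r) (v, s) i
      = (∑ j, Du f w r i j * v j) + ∑ j, Dp f w r i j * s j := by
  set D := fderiv ℝ (fun q : (Fin N → ℝ) × (Fin N → ℝ) => f q.1 q.2) (w, r) with hD
  have hv : (v, s) = (∑ j, v j • ((Pi.single j 1 : Fin N → ℝ), (0 : Fin N → ℝ)))
      + ∑ j, s j • ((0 : Fin N → ℝ), (Pi.single j 1 : Fin N → ℝ)) := by
    ext k
    · simp [Prod.fst_sum, Finset.sum_apply, Pi.single_apply, Finset.sum_ite_eq', mul_comm]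
    · simp [Prod.snd_sum, Finset.sum_apply, Pi.single_apply, Finset.sum_ite_eq', mul_comm]
  rw [hv, map_add, map_sum, map_sum]
  simp only [_root_.map_smul]
  rw [Pi.add_apply, Finset.sum_apply, Finset.sum_apply]
  congr 1
  · exact Finset.sum_congr rfl fun j _ => by rw [Du_eq hf, Pi.smul_apply, smul_eq_mul, mul_comm]
  · exact Finset.sum_congr rfl fun j _ => by rw [Dp_eq hf, Pi.smul_apply, smul_eq_mul, mul_comm]

lemma exists_segment_deriv (hf : ContDiff ℝ 1 (fun q : (Fin N → ℝ) × (Fin N → ℝ) => f q.1 q.2))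
    (z₀ z₁ : (Fin N → ℝ) × (Fin N → ℝ)) (i : Fin N) :
    ∃ c ∈ Ioo (0:ℝ) 1, f z₁.1 z₁.2 i - f z₀.1 z₀.2 i
      = fderiv ℝ (fun q : (Fin N → ℝ) × (Fin N → ℝ) => f q.1 q.2)
          (z₀ + c • (z₁ - z₀)) (z₁ - z₀) i := by
  set F := fun q : (Fin N → ℝ) × (Fin N → ℝ) => f q.1 q.2 with hFdef
  set γ := fun s : ℝ => z₀ + s • (z₁ - z₀) with hγdef
  have hγ : ∀ s : ℝ, HasDerivAt γ (z₁ - z₀) s := fun s =>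
    ((hasDerivAt_id s).smul_const (z₁ - z₀)).const_add z₀ |>.congr_deriv (by simp)
  have hφ : ∀ s : ℝ, HasDerivAt (fun s => F (γ s) i)
      (fderiv ℝ F (γ s) (z₁ - z₀) i) s := by
    intro s
    have h1 : HasDerivAt (fun s => F (γ s)) (fderiv ℝ F (γ s) (z₁ - z₀)) s :=
      ((hf.differentiable one_ne_zero) (γ s)).hasFDerivAt.comp_hasDerivAt s (hγ s)
    have := (ContinuousLinearMap.proj (R := ℝ) (φ := fun _ : Fin N => ℝ) i).hasFDerivAt.comp_hasDerivAt s h1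
    exact this
  obtain ⟨c, hc, hceq⟩ := exists_hasDerivAt_eq_slope (fun s => F (γ s) i)
    (fun s => fderiv ℝ F (γ s) (z₁ - z₀) i) zero_lt_one
    (fun s _ => (hφ s).continuousAt.continuousWithinAt) (fun s _ => hφ s)
  refine ⟨c, hc, ?_⟩
  have h0 : γ 0 = z₀ := by simp [hγdef]
  have h1 : γ 1 = z₁ := by simp [hγdef]
  rw [h0, h1] at hceq
  show f z₁.1 z₁.2 i - f z₀.1 z₀.2 i = fderiv ℝ F (γ c) (z₁ - z₀) i
  rw [hceq]
  simp [hFdef]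

end Helpers

set_option maxHeartbeats 2000000 in
lemma upper {N : ℕ} (hN : 1 ≤ N)
    (A : Matrix (Fin N) (Fin N) ℝ)
    (hAdiag : ∀ i j, i ≠ j → A i j = 0) (hApos : ∀ i, 0 < A i i)
    (f : (Fin N → ℝ) → (Fin N → ℝ) → Fin N → ℝ)
    (hf : ContDiff ℝ 1 (fun q : (Fin N → ℝ) × (Fin N → ℝ) => f q.1 q.2))
    (hquasi : ∀ (w p : Fin N → ℝ) (i j : Fin N), i ≠ j →
      0 ≤ Du f w p i j ∧ Dp f w p i j = 0)
    (Ep : Fin N → ℝ) (hEp : f Ep 0 = 0)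
    (T : ℝ) (hT : 0 < T)
    (u : ℝ → ℝ → Fin N → ℝ)
    (hu : IsBddClassicalSol A f T u)
    (hinitU : ∀ x : ℝ, ∀ i : Fin N, u x 0 i ≤ Ep i) :
    ∀ x : ℝ, ∀ t ∈ Set.Icc (0 : ℝ) T, ∀ i : Fin N, u x t i ≤ Ep i := by
  obtain ⟨hcont, ⟨M, hM⟩, hdifft, hC2, heq⟩ := hu
  have hM0 : 0 ≤ M := le_trans (norm_nonneg _) (hM 0 0 ⟨le_rfl, hT.le⟩).1
  set F := fun q : (Fin N → ℝ) × (Fin N → ℝ) => f q.1 q.2 with hFdef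
  set R : ℝ := 2*M + 2*‖Ep‖ + 1 with hRdef
  obtain ⟨L₀, hL₀⟩ := (isCompact_closedBall (0 : (Fin N → ℝ) × (Fin N → ℝ)) R).exists_bound_of_continuousOn
    ((hf.continuous_fderiv one_ne_zero).continuousOn)
  set L := max L₀ 0 with hLdef
  have hLnn : (0:ℝ) ≤ L := le_max_right _ _
  have hLb : ∀ q ∈ Metric.closedBall (0 : (Fin N → ℝ) × (Fin N → ℝ)) R, ‖fderiv ℝ F q‖ ≤ L :=
    fun q hq => le_trans (hL₀ q hq) (le_max_left _ _)
  -- entrywise bounds on the Jacobians over the ball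
  have hsingle : ∀ j : Fin N, ‖(Pi.single j 1 : Fin N → ℝ)‖ ≤ 1 := by
    intro j; rw [Pi.norm_single]; simp
  have hDub : ∀ wr : (Fin N → ℝ) × (Fin N → ℝ), wr ∈ Metric.closedBall 0 R →
      ∀ i j, |Du f wr.1 wr.2 i j| ≤ L := by
    intro wr hwr i j
    rw [Du_eq hf]
    calc |fderiv ℝ F (wr.1, wr.2) (Pi.single j 1, 0) i|
        ≤ ‖fderiv ℝ F (wr.1, wr.2) (Pi.single j 1, 0)‖ := by
          rw [← Real.norm_eq_abs]; exact norm_le_pi_norm _ i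
      _ ≤ ‖fderiv ℝ F (wr.1, wr.2)‖ * ‖((Pi.single j 1 : Fin N → ℝ), (0 : Fin N → ℝ))‖ :=
          ContinuousLinearMap.le_opNorm _ _
      _ ≤ L * 1 := by
          apply mul_le_mul (hLb _ hwr) _ (norm_nonneg _) hLnn
          rw [Prod.norm_def]
          simp only [norm_zero]
          exact max_le (hsingle j) zero_le_one
      _ = L := mul_one L
  have hDpb : ∀ wr : (Fin N → ℝ) × (Fin N → ℝ), wr ∈ Metric.closedBall 0 R →
      ∀ i j, |Dp f wr.1 wr.2 i j| ≤ L := by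
    intro wr hwr i j
    rw [Dp_eq hf]
    calc |fderiv ℝ F (wr.1, wr.2) (0, Pi.single j 1) i|
        ≤ ‖fderiv ℝ F (wr.1, wr.2) (0, Pi.single j 1)‖ := by
          rw [← Real.norm_eq_abs]; exact norm_le_pi_norm _ i
      _ ≤ ‖fderiv ℝ F (wr.1, wr.2)‖ * ‖((0 : Fin N → ℝ), (Pi.single j 1 : Fin N → ℝ))‖ :=
          ContinuousLinearMap.le_opNorm _ _
      _ ≤ L * 1 := by
          apply mul_le_mul (hLb _ hwr) _ (norm_nonneg _) hLnn
          rw [Prod.norm_def]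
          simp only [norm_zero]
          exact max_le zero_le_one (hsingle j)
      _ = L := mul_one L
  haveI : Nonempty (Fin N) := ⟨⟨0, hN⟩⟩
  set Amax := Finset.univ.sup' Finset.univ_nonempty (fun i => A i i) with hAmaxdef
  have hAmax : ∀ i, A i i ≤ Amax := fun i => Finset.le_sup' (fun j => A j j) (Finset.mem_univ i)
  have hAmax0 : 0 < Amax := lt_of_lt_of_le (hApos ⟨0, hN⟩) (hAmax _)
  set K := 2*Amax + ((N:ℝ)+2)*L + 1 with hKdef
  have hK0 : (0:ℝ) < K := by
    have hNc : (0:ℝ) ≤ (N:ℝ) := Nat.cast_nonneg N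
    nlinarith [hAmax0, hLnn]
  -- the main claim for each ε > 0
  have main : ∀ ε : ℝ, 0 < ε → ∀ x : ℝ, ∀ t ∈ Set.Icc (0:ℝ) T, ∀ i : Fin N,
      u x t i - Ep i - ε*(1+x^2)*Real.exp (K*t) < 0 := by
    intro ε hε
    by_contra hbad
    push_neg at hbad
    obtain ⟨x₀, t₀, ht₀, i₀, hge0⟩ := hbad
    set g : Fin N → ℝ × ℝ → ℝ :=
      fun j q => u q.1 q.2 j - Ep j - ε*(1+q.1^2)*Real.exp (K*q.2) with hgdef
    set B : Set (ℝ × ℝ) := ⋃ j : Fin N, ((Set.univ ×ˢ Icc 0 T) ∩ g j ⁻¹' Ici 0) with hBdef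
    have hBne : B.Nonempty := by
      refine ⟨(x₀, t₀), mem_iUnion.mpr ⟨i₀, ⟨⟨trivial, ht₀⟩, ?_⟩⟩⟩
      simpa [hgdef] using hge0
    have hgcont : ∀ j, ContinuousOn (g j) (Set.univ ×ˢ Icc 0 T) := by
      intro j
      apply ContinuousOn.sub
      apply ContinuousOn.sub
      · exact (continuous_apply j).comp_continuousOn hcont
      · exact continuousOn_const
      · exact ((continuous_const.mul ((continuous_const.add (continuous_fst.pow 2)))).mul
          (Real.continuous_exp.comp (continuous_const.mul continuous_snd))).continuousOn
    have hScl : IsClosed ((Set.univ ×ˢ Icc 0 T) : Set (ℝ×ℝ)) := isClosed_univ.prod isClosed_Icc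
    have hBclosed : IsClosed B :=
      isClosed_iUnion_of_finite fun j =>
        (hgcont j).preimage_isClosed_of_isClosed hScl isClosed_Ici
    set r : ℝ := (M + ‖Ep‖)/ε with hrdef
    have hsubB : B ⊆ Icc (-r) r ×ˢ Icc 0 T := by
      rintro q hq
      rw [hBdef, mem_iUnion] at hq
      obtain ⟨j, ⟨⟨-, hqt⟩, hqg⟩⟩ := hq
      have h1 : (0:ℝ) ≤ g j q := hqg
      have hexp1 : 1 ≤ Real.exp (K*q.2) := Real.one_le_exp (mul_nonneg hK0.le hqt.1)
      have h2 : u q.1 q.2 j ≤ M := by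
        refine le_trans (le_abs_self _) (le_trans ?_ (hM q.1 q.2 hqt).1)
        rw [← Real.norm_eq_abs]; exact norm_le_pi_norm _ j
      have h3 : -‖Ep‖ ≤ Ep j := by
        have := norm_le_pi_norm Ep j
        rw [Real.norm_eq_abs] at this
        linarith [abs_le.mp this |>.1]
      have h4 : ε*(1+q.1^2) ≤ M + ‖Ep‖ := by
        have hfac : 0 ≤ ε*(1+q.1^2) := by positivity
        simp only [hgdef] at h1
        nlinarith
      refine ⟨?_, hqt⟩
      have h5 : 1 + q.1^2 ≤ r := by
        rw [hrdef, le_div_iff₀ hε]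
        linarith
      have h6 : |q.1| ≤ 1 + q.1^2 := by
        nlinarith [sq_nonneg (|q.1| - 1), sq_abs q.1, abs_nonneg q.1]
      exact abs_le.mp (h6.trans h5)
    have hBcpt : IsCompact B :=
      IsCompact.of_isClosed_subset (isCompact_Icc.prod isCompact_Icc) hBclosed hsubB
    obtain ⟨q', hq'B, hq'min⟩ := hBcpt.exists_isMinOn hBne continuous_snd.continuousOn
    have hmin : ∀ q ∈ B, q'.2 ≤ q.2 := fun q hq => hq'min hq
    obtain ⟨xc, tc⟩ := q'
    rw [hBdef, mem_iUnion] at hq'B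
    obtain ⟨i, ⟨⟨-, htc⟩, hgi⟩⟩ := hq'B
    have hgi : (0:ℝ) ≤ g i (xc, tc) := hgi
    have htcpos : 0 < tc := by
      rcases eq_or_lt_of_le htc.1 with h | h
      · exfalso
        subst h
        simp only [hgdef, mul_zero, Real.exp_zero] at hgi
        nlinarith [sq_nonneg xc, hinitU xc i]
      · exact h
    have htcIoc : tc ∈ Set.Ioc (0:ℝ) T := ⟨htcpos, htc.2⟩
    have keyA : ∀ (j : Fin N) (x : ℝ), g j (x, tc) ≤ 0 := by
      intro j x
      by_contra hposj
      push_neg at hposj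
      have hψ : ContinuousWithinAt (fun s => g j (x, s)) (Icc 0 T) tc := by
        have hmap : ContinuousOn (fun s : ℝ => ((x, s) : ℝ×ℝ)) (Icc 0 T) :=
          (continuous_const.prodMk continuous_id).continuousOn
        exact ((hgcont j).comp hmap fun s hs => ⟨trivial, hs⟩) tc htc
      have hev : ∀ᶠ s in 𝓝[Icc 0 T] tc, 0 < g j (x, s) :=
        hψ.eventually (eventually_gt_nhds hposj)
      have hne : (𝓝[Ioo 0 tc] tc).NeBot := by
        apply mem_closure_iff_nhdsWithin_neBot.mp
        rw [closure_Ioo (ne_of_lt htcpos)]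
        exact ⟨htcpos.le, le_rfl⟩
      have hsubI : Ioo 0 tc ⊆ Icc 0 T := fun s hs => ⟨hs.1.le, hs.2.le.trans htc.2⟩
      have hev2 : ∀ᶠ s in 𝓝[Ioo 0 tc] tc, 0 < g j (x, s) :=
        hev.filter_mono (nhdsWithin_mono _ hsubI)
      obtain ⟨s, hs1, hs2⟩ := (hev2.and self_mem_nhdsWithin).exists
      have hsB : (x, s) ∈ B :=
        mem_iUnion.mpr ⟨j, ⟨⟨trivial, ⟨hs2.1.le, hs2.2.le.trans htc.2⟩⟩, hs1.le⟩⟩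
      exact absurd (hmin _ hsB) (not_le.mpr hs2.2)
    have keyB : g i (xc, tc) = 0 := le_antisymm (keyA i xc) hgi
    have keyC : ∀ s ∈ Ico (0:ℝ) tc, g i (xc, s) < 0 := by
      intro s hs
      by_contra hc
      push_neg at hc
      have hsB : (xc, s) ∈ B :=
        mem_iUnion.mpr ⟨i, ⟨⟨trivial, ⟨hs.1, hs.2.le.trans htc.2⟩⟩, hc⟩⟩
      exact absurd (hmin _ hsB) (not_le.mpr hs.2)
    -- analysis at the first touching point
    set U := fun y => u y tc with hUdef
    have hU2 : ContDiff ℝ 2 U := hC2 tc htcIoc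
    set c := Real.exp (K*tc) with hcdef
    have hcpos : 0 < c := Real.exp_pos _
    have hUdiff : Differentiable ℝ U := hU2.differentiable two_ne_zero
    have hU1 : ContDiff ℝ 1 (deriv U) :=
      ((contDiff_succ_iff_deriv (n := 1)).mp (by norm_num at hU2 ⊢; exact hU2)).2.2
    have hbar' : ∀ y : ℝ, HasDerivAt (fun y : ℝ => ε*(1+y^2)*c) (2*ε*c*y) y := by
      intro y
      have h1 : HasDerivAt (fun y : ℝ => 1+y^2) (2*y) y := by
        simpa using (hasDerivAt_pow 2 y).const_add 1
      have h2 := (h1.const_mul ε).mul_const c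
      exact h2.congr_deriv (by ring)
    set h := fun y => U y i - ε*(1+y^2)*c with hhdef
    have hUi2 : ContDiff ℝ 2 (fun y => U y i) :=
      (ContinuousLinearMap.proj (R := ℝ) (φ := fun _ : Fin N => ℝ) i).contDiff.comp hU2
    have hbar2 : ContDiff ℝ 2 (fun y : ℝ => ε*(1+y^2)*c) :=
      (contDiff_const.mul (contDiff_const.add (contDiff_id.pow 2))).mul contDiff_const
    have hh2 : ContDiff ℝ 2 h := hUi2.sub hbar2
    have hmax : ∀ y, h y ≤ h xc := by
      intro y
      have h1 := keyA i y
      have h2 := keyB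
      simp only [hgdef] at h1 h2
      simp only [hhdef, hUdef, hcdef]
      linarith
    have hd1 : deriv h xc = 0 := IsLocalMax.deriv_eq_zero (Filter.Eventually.of_forall hmax)
    have hUid : ∀ y, HasDerivAt (fun y => U y i) (deriv U y i) y :=
      fun y => hasDerivAt_pi_apply U (hUdiff y) i
    have hdh : ∀ y, HasDerivAt h (deriv U y i - 2*ε*c*y) y :=
      fun y => (hUid y).sub (hbar' y)
    have hpx : deriv U xc i = 2*ε*c*xc := by
      have := (hdh xc).deriv
      rw [hd1] at this
      linarith
    have hderivh : deriv h = fun y => deriv U y i - 2*ε*c*y := funext fun y => (hdh y).deriv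
    have hd2 : deriv (deriv h) xc ≤ 0 := deriv2_nonpos_of_isMaxOn hh2 hmax
    have hUdd : ∀ y, HasDerivAt (fun y => deriv U y i) (deriv (deriv U) y i) y :=
      fun y => hasDerivAt_pi_apply (deriv U) ((hU1.differentiable one_ne_zero) y) i
    have hlin : ∀ y : ℝ, HasDerivAt (fun y : ℝ => 2*ε*c*y) (2*ε*c) y := fun y => by
      simpa using (hasDerivAt_id y).const_mul (2*ε*c)
    have hd2' : deriv (deriv h) xc = deriv (deriv U) xc i - 2*ε*c := by
      rw [hderivh]
      exact ((hUdd xc).sub (hlin xc)).deriv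
    have huxx : deriv (deriv U) xc i ≤ 2*ε*c := by rw [hd2'] at hd2; linarith
    -- time derivative at the touching point
    have hdt := hdifft xc tc htcIoc
    have hut : HasDerivAt (fun s => u xc s i) (deriv (fun s => u xc s) tc i) tc :=
      hasDerivAt_pi_apply _ hdt i
    have hKs : HasDerivAt (fun s : ℝ => K*s) K tc := by
      simpa using (hasDerivAt_id tc).const_mul K
    have hexp : HasDerivAt (fun s : ℝ => ε*(1+xc^2)*Real.exp (K*s))
        (ε*(1+xc^2)*(Real.exp (K*tc)*K)) tc := hKs.exp.const_mul _
    have hφ : HasDerivAt (fun s => u xc s i - Ep i - ε*(1+xc^2)*Real.exp (K*s))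
        (deriv (fun s => u xc s) tc i - ε*(1+xc^2)*(c*K)) tc := by
      have := (hut.sub_const (Ep i)).sub hexp
      rw [hcdef]
      exact this
    have hslopet : Tendsto (slope (fun s => u xc s i - Ep i - ε*(1+xc^2)*Real.exp (K*s)) tc)
        (𝓝[<] tc) (𝓝 (deriv (fun s => u xc s) tc i - ε*(1+xc^2)*(c*K))) :=
      (hasDerivAt_iff_tendsto_slope.mp hφ).mono_left
        (nhdsWithin_mono _ fun y hy => ne_of_lt hy)
    have hφtc : u xc tc i - Ep i - ε*(1+xc^2)*Real.exp (K*tc) = 0 := by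
      have := keyB; simp only [hgdef] at this; exact this
    have hevt : ∀ᶠ s in 𝓝[<] tc,
        (0:ℝ) ≤ slope (fun s => u xc s i - Ep i - ε*(1+xc^2)*Real.exp (K*s)) tc s := by
      filter_upwards [Ioo_mem_nhdsLT_of_mem (⟨htcpos, le_rfl⟩ : tc ∈ Ioc 0 tc)] with s hs
      have h1 := keyC s ⟨hs.1.le, hs.2⟩
      simp only [hgdef] at h1
      rw [slope_def_field, hφtc]
      have hnum : u xc s i - Ep i - ε * (1 + xc ^ 2) * Real.exp (K * s) - 0 ≤ 0 := by linarith
      have hden2 : s - tc ≤ 0 := by linarith [hs.2]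
      exact div_nonneg_of_nonpos hnum hden2
    have hd0 : 0 ≤ deriv (fun s => u xc s) tc i - ε*(1+xc^2)*(c*K) :=
      ge_of_tendsto hslopet hevt
    -- evaluate the equation at (xc, tc) and component i
    have heqc := heq xc tc htcIoc
    rw [← hUdef] at heqc
    have heqi : deriv (fun s => u xc s) tc i
        = A i i * (deriv (deriv U) xc i) + f (u xc tc) (deriv U xc) i := by
      rw [heqc, Pi.add_apply]
      congr 1
      rw [Matrix.mulVec, dotProduct]
      rw [Finset.sum_eq_single i (fun b _ hb => by rw [hAdiag i b (fun hh => hb hh.symm)]; ring)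
        (fun hmem => absurd (Finset.mem_univ i) hmem)]
    -- mean value theorem for f between (Ep, 0) and (u xc tc, deriv U xc)
    obtain ⟨θ, hθ, hmvt⟩ := exists_segment_deriv hf (Ep, 0) (u xc tc, deriv U xc) i
    set wξ := Ep + θ • (u xc tc - Ep) with hwξdef
    set rξ := θ • (deriv U xc) with hrξdef
    have hξeq : ((Ep, 0) : (Fin N → ℝ) × (Fin N → ℝ))
        + θ • ((u xc tc, deriv U xc) - (Ep, 0)) = (wξ, rξ) := by
      ext k
      · simp [hwξdef]
      · simp [hrξdef]
    have hΔeq : ((u xc tc, deriv U xc) : (Fin N → ℝ) × (Fin N → ℝ)) - (Ep, 0)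
        = (u xc tc - Ep, deriv U xc) := by
      ext k <;> simp
    rw [hξeq, hΔeq] at hmvt
    have hEp0 : f Ep 0 i = 0 := by rw [hEp]; rfl
    rw [hEp0, sub_zero, fderiv_apply_decomp hf] at hmvt
    -- the segment point lies in the ball of radius R
    have hMu : ‖u xc tc‖ ≤ M := (hM xc tc htc).1
    have hMp : ‖deriv U xc‖ ≤ M := by
      rw [hUdef]
      exact (hM xc tc htc).2
    have hξball : ((wξ, rξ) : (Fin N → ℝ) × (Fin N → ℝ)) ∈ Metric.closedBall 0 R := by
      rw [Metric.mem_closedBall, dist_zero_right, Prod.norm_def]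
      have hwb : ‖wξ‖ ≤ ‖Ep‖ + (M + ‖Ep‖) := by
        rw [hwξdef]
        refine le_trans (norm_add_le _ _) ?_
        have h1 : ‖θ • (u xc tc - Ep)‖ ≤ M + ‖Ep‖ := by
          rw [norm_smul, Real.norm_eq_abs, abs_of_pos hθ.1]
          have h2 : ‖u xc tc - Ep‖ ≤ M + ‖Ep‖ :=
            le_trans (norm_sub_le _ _) (by linarith)
          nlinarith [hθ.2, norm_nonneg (u xc tc - Ep), hθ.1]
        linarith
      have hrb : ‖rξ‖ ≤ M := by
        rw [hrξdef, norm_smul, Real.norm_eq_abs, abs_of_pos hθ.1]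
        nlinarith [hθ.2, norm_nonneg (deriv U xc), hθ.1]
      refine max_le ?_ ?_
      · show ‖wξ‖ ≤ R
        rw [hRdef]; linarith [norm_nonneg Ep, hM0]
      · show ‖rξ‖ ≤ R
        rw [hRdef]; linarith [norm_nonneg Ep, hM0]
    -- size of the gap at the touching point
    set E := ε*(1+xc^2)*c with hEdef
    have hEpos : 0 < E := by rw [hEdef]; positivity
    have e1 : u xc tc i - Ep i = E := by
      linarith [hφtc]
    have e2 : ∀ j, u xc tc j - Ep j ≤ E := by
      intro j
      have hka := keyA j xc
      simp only [hgdef] at hka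
      rw [← hcdef, ← hEdef] at hka
      linarith
    have habsxc : |xc| ≤ 1 + xc^2 := by
      nlinarith [sq_nonneg (|xc| - 1), sq_abs xc, abs_nonneg xc]
    -- bound the Du sum
    have hsum1 : ∑ j, Du f wξ rξ i j * ((u xc tc - Ep) j) ≤ (N:ℝ) * (L*E) := by
      calc ∑ j, Du f wξ rξ i j * ((u xc tc - Ep) j)
          ≤ ∑ _j : Fin N, L*E := by
            apply Finset.sum_le_sum
            intro j _
            rw [Pi.sub_apply]
            rcases eq_or_ne j i with hji | hji
            · rw [hji, e1]
              exact mul_le_mul_of_nonneg_right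
                (le_trans (le_abs_self _) (hDub (wξ, rξ) hξball i i)) hEpos.le
            · have hq := hquasi wξ rξ i j (fun hh => hji hh.symm)
              calc Du f wξ rξ i j * (u xc tc j - Ep j)
                  ≤ Du f wξ rξ i j * E := mul_le_mul_of_nonneg_left (e2 j) hq.1
                _ ≤ L * E := mul_le_mul_of_nonneg_right
                    (le_trans (le_abs_self _) (hDub (wξ, rξ) hξball i j)) hEpos.le
        _ = (N:ℝ) * (L*E) := by
            rw [Finset.sum_const, Finset.card_univ, Fintype.card_fin, nsmul_eq_mul]
    -- bound the Dp sum
    have hsum2 : ∑ j, Dp f wξ rξ i j * (deriv U xc j) = Dp f wξ rξ i i * (deriv U xc i) := by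
      apply Finset.sum_eq_single i
      · intro b _ hb
        rw [(hquasi wξ rξ i b (fun hh => hb hh.symm)).2]
        ring
      · intro hmem; exact absurd (Finset.mem_univ i) hmem
    have hDpterm : Dp f wξ rξ i i * (deriv U xc i) ≤ 2*(L*E) := by
      calc Dp f wξ rξ i i * (deriv U xc i)
          ≤ |Dp f wξ rξ i i * (deriv U xc i)| := le_abs_self _
        _ = |Dp f wξ rξ i i| * |deriv U xc i| := abs_mul _ _
        _ ≤ L * (2*ε*c*(1+xc^2)) := by
            apply mul_le_mul (hDpb (wξ, rξ) hξball i i) ?_ (abs_nonneg _) hLnn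
            rw [hpx, abs_mul, abs_mul, abs_mul]
            rw [abs_of_pos (show (0:ℝ) < 2 by norm_num), abs_of_pos hε, abs_of_pos hcpos]
            nlinarith [habsxc, hε, hcpos, abs_nonneg xc]
        _ = 2*(L*E) := by rw [hEdef]; ring
    -- combine everything
    have hfub : f (u xc tc) (deriv U xc) i ≤ (N:ℝ)*(L*E) + 2*(L*E) := by
      rw [hmvt, hsum2]
      linarith
    have hAterm : A i i * (deriv (deriv U) xc i) ≤ Amax * (2*E) := by
      have h1 : A i i * (deriv (deriv U) xc i) ≤ A i i * (2*ε*c) :=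
        mul_le_mul_of_nonneg_left huxx (hApos i).le
      have h2 : A i i * (2*ε*c) ≤ Amax * (2*ε*c) :=
        mul_le_mul_of_nonneg_right (hAmax i) (by positivity)
      have h3 : Amax * (2*ε*c) ≤ Amax * (2*E) := by
        rw [hEdef]
        apply mul_le_mul_of_nonneg_left _ hAmax0.le
        nlinarith [sq_nonneg xc, hε, hcpos]
      linarith
    have hcontr : K * E ≤ Amax * (2*E) + ((N:ℝ)*(L*E) + 2*(L*E)) := by
      have h1 : K * E ≤ deriv (fun s => u xc s) tc i := by
        rw [hEdef]
        nlinarith [hd0]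
      rw [heqi] at h1
      linarith
    rw [hKdef] at hcontr
    nlinarith [hEpos]
  -- conclude from the main claim
  intro x t ht i
  by_contra hlt
  push_neg at hlt
  set δ := u x t i - Ep i with hδdef
  have hδ : 0 < δ := by simp only [hδdef]; linarith
  have hden : (0:ℝ) < 2*(1+x^2)*Real.exp (K*T) := by positivity
  set ε := δ / (2*(1+x^2)*Real.exp (K*T)) with hεdef
  have hε : 0 < ε := div_pos hδ hden
  have h1 := main ε hε x t ht i
  have h2 : Real.exp (K*t) ≤ Real.exp (K*T) :=
    Real.exp_le_exp.mpr (mul_le_mul_of_nonneg_left ht.2 hK0.le)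
  have h3 : ε*(1+x^2)*Real.exp (K*t) ≤ ε*(1+x^2)*Real.exp (K*T) := by
    apply mul_le_mul_of_nonneg_left h2 (by positivity)
  have h4 : ε*(1+x^2)*Real.exp (K*T) = δ/2 := by
    rw [hεdef]; field_simp
  rw [h4] at h3
  linarith

lemma Du_neg {N : ℕ} {f : (Fin N → ℝ) → (Fin N → ℝ) → Fin N → ℝ}
    (hf : ContDiff ℝ 1 (fun q : (Fin N → ℝ) × (Fin N → ℝ) => f q.1 q.2))
    (v p : Fin N → ℝ) (i j : Fin N) :
    Du (fun w q => -f (-w) (-q)) v p i j = Du f (-v) (-p) i j := by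
  have h1 := hasFDerivAt_partial_fst hf (-v) (-p) i
  have h2 : HasFDerivAt (fun w' : Fin N → ℝ => -w')
      (-(ContinuousLinearMap.id ℝ (Fin N → ℝ))) v := (hasFDerivAt_id v).neg
  have h3 := h1.comp v h2
  have h4' : HasFDerivAt (fun w' : Fin N → ℝ => -f (-w') (-p) i)
      (-(((ContinuousLinearMap.proj (R := ℝ) (φ := fun _ : Fin N => ℝ) i)).comp
        ((fderiv ℝ (fun q : (Fin N → ℝ) × (Fin N → ℝ) => f q.1 q.2) (-v, -p)).comp
          (ContinuousLinearMap.inl ℝ _ _))).comp (-(ContinuousLinearMap.id ℝ (Fin N → ℝ)))) v :=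
    h3.neg
  show fderiv ℝ (fun w' : Fin N → ℝ => -f (-w') (-p) i) v (Pi.single j 1)
    = fderiv ℝ (fun u' : Fin N → ℝ => f u' (-p) i) (-v) (Pi.single j 1)
  rw [h4'.fderiv, h1.fderiv]
  simp

lemma Dp_neg {N : ℕ} {f : (Fin N → ℝ) → (Fin N → ℝ) → Fin N → ℝ}
    (hf : ContDiff ℝ 1 (fun q : (Fin N → ℝ) × (Fin N → ℝ) => f q.1 q.2))
    (v p : Fin N → ℝ) (i j : Fin N) :
    Dp (fun w q => -f (-w) (-q)) v p i j = Dp f (-v) (-p) i j := by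
  have h1 := hasFDerivAt_partial_snd hf (-v) (-p) i
  have h2 : HasFDerivAt (fun p' : Fin N → ℝ => -p')
      (-(ContinuousLinearMap.id ℝ (Fin N → ℝ))) p := (hasFDerivAt_id p).neg
  have h3 := h1.comp p h2
  have h4' : HasFDerivAt (fun p' : Fin N → ℝ => -f (-v) (-p') i)
      (-(((ContinuousLinearMap.proj (R := ℝ) (φ := fun _ : Fin N => ℝ) i)).comp
        ((fderiv ℝ (fun q : (Fin N → ℝ) × (Fin N → ℝ) => f q.1 q.2) (-v, -p)).comp
          (ContinuousLinearMap.inr ℝ _ _))).comp (-(ContinuousLinearMap.id ℝ (Fin N → ℝ)))) p :=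
    h3.neg
  show fderiv ℝ (fun p' : Fin N → ℝ => -f (-v) (-p') i) p (Pi.single j 1)
    = fderiv ℝ (fun p' : Fin N → ℝ => f (-v) p' i) (-p) (Pi.single j 1)
  rw [h4'.fderiv, h1.fderiv]
  simp


/-- for a quasimonotone system, the order interval [E⁻, E⁺]
between two ordered equilibria is invariant for bounded classical solutions. -/
theorem order_interval_invariant
    (N : ℕ) (hN : 1 ≤ N)
    (A : Matrix (Fin N) (Fin N) ℝ)
    (hAdiag : ∀ i j, i ≠ j → A i j = 0) (hApos : ∀ i, 0 < A i i)
    (f : (Fin N → ℝ) → (Fin N → ℝ) → Fin N → ℝ)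
    (hf : ContDiff ℝ 1 (fun q : (Fin N → ℝ) × (Fin N → ℝ) => f q.1 q.2))
    (hquasi : ∀ (w p : Fin N → ℝ) (i j : Fin N), i ≠ j →
      0 ≤ Du f w p i j ∧ Dp f w p i j = 0)
    (Em Ep : Fin N → ℝ)
    (hEm : f Em 0 = 0) (hEp : f Ep 0 = 0)
    (hEmEp : ∀ i, Em i ≤ Ep i)
    (T : ℝ) (hT : 0 < T)
    (u : ℝ → ℝ → Fin N → ℝ)
    (hu : IsBddClassicalSol A f T u)
    (hinit : ∀ x : ℝ, ∀ i : Fin N, Em i ≤ u x 0 i ∧ u x 0 i ≤ Ep i) :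
    ∀ x : ℝ, ∀ t ∈ Set.Icc (0 : ℝ) T, ∀ i : Fin N,
      Em i ≤ u x t i ∧ u x t i ≤ Ep i := by
  have hupper := upper hN A hAdiag hApos f hf hquasi Ep hEp T hT u hu
    (fun x i => (hinit x i).2)
  -- lower bound via the negation transformation
  set f2 : (Fin N → ℝ) → (Fin N → ℝ) → Fin N → ℝ := fun w q => -f (-w) (-q) with hf2def
  set v : ℝ → ℝ → Fin N → ℝ := fun x t => -u x t with hvdef
  have hf2 : ContDiff ℝ 1 (fun q : (Fin N → ℝ) × (Fin N → ℝ) => f2 q.1 q.2) :=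
    (hf.comp contDiff_id.neg).neg
  have hquasi2 : ∀ (w p : Fin N → ℝ) (i j : Fin N), i ≠ j →
      0 ≤ Du f2 w p i j ∧ Dp f2 w p i j = 0 := by
    intro w p i j hij
    rw [hf2def, Du_neg hf w p i j, Dp_neg hf w p i j]
    exact hquasi _ _ i j hij
  have hEm2 : f2 (-Em) 0 = 0 := by
    funext k
    simp [hf2def, hEm]
  obtain ⟨hcont, ⟨M, hM⟩, hdifft, hC2, heq⟩ := hu
  have hderivneg : ∀ t, deriv (fun y => v y t) = fun z => -deriv (fun y => u y t) z := by
    intro t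
    funext z
    rw [hvdef]
    exact deriv.neg
  have hv : IsBddClassicalSol A f2 T v := by
    refine ⟨hcont.neg, ⟨M, fun x t ht => ?_⟩, fun x t ht => (hdifft x t ht).neg,
      fun t ht => (hC2 t ht).neg, fun x t ht => ?_⟩
    · constructor
      · rw [hvdef]
        simpa using (hM x t ht).1
      · rw [hderivneg t]
        simpa using (hM x t ht).2
    · have h1 : deriv (fun s => v x s) t = -deriv (fun s => u x s) t := by
        rw [hvdef]; exact deriv.neg
      have h2 : deriv (deriv (fun y => v y t)) x = -deriv (deriv (fun y => u y t)) x := by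
        rw [hderivneg t]
        exact deriv.neg
      rw [h1, h2, heq x t ht]
      have h3 : v x t = -u x t := by rw [hvdef]
      have h4 : deriv (fun y => v y t) x = -deriv (fun y => u y t) x := by
        rw [hderivneg t]
      rw [h3, h4, hf2def]
      simp [Matrix.mulVec_neg]
      abel
  have hlow := upper hN A hAdiag hApos f2 hf2 hquasi2 (-Em) hEm2 T hT v hv
    (fun x i => by
      rw [hvdef]
      simpa using neg_le_neg (hinit x i).1)
  intro x t ht i
  refine ⟨?_, hupper x t ht i⟩
  have h5 := hlow x t ht i
  rw [hvdef] at h5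
  simp only [Pi.neg_apply] at h5
  linarith
end
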